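/- arXiv:math/0111022 — 2 statements merged into one kernel-verified Lean document; each statement's English description precedes it below -/
import Mathlib

section
/- For real q with 0 < q < 1 and |z| < 1, (1-q)^n · Li_n(z;q) converges to Li_n(z) = Σ_{k≥1} z^k/k^n as q → 1⁻, where Li_n(z;q) = Σ_{k≥1} z^k/(1-q^k)^n. -/
/-- The q-deformed polylogarithm with real parameter `q`. -/
noncomputable def qLi (n : ℕ) (z : ℂ) (q : ℝ) : ℂ :=
  ∑' k : ℕ+, z ^ (k : ℕ) / (1 - (q : ℂ) ^ (k : ℕ)) ^ n

/-- The classical polylogarithm `Li_n(z) = Σ_{k≥1} z^k/k^n`. -/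
noncomputable def Li (n : ℕ) (z : ℂ) : ℂ :=
  ∑' k : ℕ+, z ^ (k : ℕ) / ((k : ℂ)) ^ n

theorem qLi_tendsto_Li (n : ℕ) (hn : 1 ≤ n) (z : ℂ) (hz : ‖z‖ < 1) :
    Filter.Tendsto (fun q : ℝ => ((1 - q : ℂ)) ^ n * qLi n z q)
      (nhdsWithin 1 (Set.Ioo 0 1)) (nhds (Li n z)) := by
  have key : Filter.Tendsto
      (fun q : ℝ => ∑' k : ℕ+, (1 - (q : ℂ)) ^ n * (z ^ (k : ℕ) / (1 - (q : ℂ) ^ (k : ℕ)) ^ n))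
      (nhdsWithin 1 (Set.Ioo 0 1)) (nhds (Li n z)) := by
    unfold Li
    apply tendsto_tsum_of_dominated_convergence (bound := fun k : ℕ+ => ‖z‖ ^ (k : ℕ))
    · exact (summable_geometric_of_lt_one (norm_nonneg z) hz).comp_injective
        (fun a b h => PNat.coe_injective h)
    · intro k
      have hk0 : ((k : ℕ) : ℂ) ≠ 0 := Nat.cast_ne_zero.mpr k.pos.ne'
      -- the geometric sum tends to k
      have hS : Filter.Tendsto (fun q : ℝ => ∑ i ∈ Finset.range (k : ℕ), (q : ℂ) ^ i)
          (nhdsWithin 1 (Set.Ioo 0 1)) (nhds (((k : ℕ) : ℂ))) := by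
        have hc : Continuous (fun q : ℝ => ∑ i ∈ Finset.range (k : ℕ), (q : ℂ) ^ i) := by
          continuity
        have h1 := hc.tendsto 1
        simp only [Complex.ofReal_one, one_pow, Finset.sum_const, Finset.card_range,
          nsmul_eq_mul, mul_one] at h1
        exact h1.mono_left nhdsWithin_le_nhds
      have hlim := (Filter.Tendsto.pow (hS.inv₀ hk0) n).const_mul (z ^ (k : ℕ))
      have hlim' : Filter.Tendsto
          (fun q : ℝ => z ^ (k : ℕ) * ((∑ i ∈ Finset.range (k : ℕ), (q : ℂ) ^ i)⁻¹) ^ n)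
          (nhdsWithin 1 (Set.Ioo 0 1)) (nhds (z ^ (k : ℕ) / ((k : ℕ) : ℂ) ^ n)) := by
        simpa [div_eq_mul_inv, inv_pow] using hlim
      refine hlim'.congr' ?_
      filter_upwards [self_mem_nhdsWithin] with q hq
      obtain ⟨hq0, hq1⟩ := hq
      set S : ℂ := ∑ i ∈ Finset.range (k : ℕ), (q : ℂ) ^ i with hSdef
      have hgeo : (1 - (q : ℂ)) * S = 1 - (q : ℂ) ^ (k : ℕ) := by
        have := geom_sum_mul (q : ℂ) (k : ℕ)
        rw [hSdef]
        linear_combination -this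
      have hx1 : (1 : ℂ) - q ≠ 0 := by
        intro h
        have h' : (q : ℂ) = 1 := by linear_combination -h
        exact absurd (by exact_mod_cast h' : q = 1) hq1.ne
      have hxk : (1 : ℂ) - (q : ℂ) ^ (k : ℕ) ≠ 0 := by
        have hqk : q ^ (k : ℕ) < 1 := pow_lt_one₀ hq0.le hq1 k.pos.ne'
        intro h
        have h' : (q : ℂ) ^ (k : ℕ) = 1 := by linear_combination -h
        have : q ^ (k : ℕ) = 1 := by exact_mod_cast h'
        linarith
      have hS0 : S ≠ 0 := by
        intro h
        rw [h, mul_zero] at hgeo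
        exact hxk hgeo.symm
      rw [← hgeo, mul_pow]
      have hx1n : ((1 : ℂ) - q) ^ n ≠ 0 := pow_ne_zero _ hx1
      have hSn : S ^ n ≠ 0 := pow_ne_zero _ hS0
      field_simp
      ring_nf
      rw [mul_assoc, ← mul_pow, mul_inv_cancel₀ hS0, one_pow, mul_one]
    · filter_upwards [self_mem_nhdsWithin] with q hq k
      obtain ⟨hq0, hq1⟩ := hq
      have hqk : q ^ (k : ℕ) ≤ q := by
        calc q ^ (k : ℕ) ≤ q ^ 1 := pow_le_pow_of_le_one hq0.le hq1.le k.pos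
        _ = q := pow_one q
      have h1q : (0:ℝ) ≤ 1 - q := by linarith
      have h1qk : (0:ℝ) < 1 - q ^ (k : ℕ) := by
        have : q ^ (k : ℕ) < 1 := pow_lt_one₀ hq0.le hq1 k.pos.ne'
        linarith
      have hcast1 : (1 : ℂ) - q = ((1 - q : ℝ) : ℂ) := by push_cast; ring
      have hcast2 : (1 : ℂ) - (q : ℂ) ^ (k : ℕ) = ((1 - q ^ (k : ℕ) : ℝ) : ℂ) := by
        push_cast; ring
      rw [norm_mul, norm_pow, norm_div, norm_pow, norm_pow, hcast1, hcast2,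
        Complex.norm_real, Complex.norm_real, Real.norm_of_nonneg h1q,
        Real.norm_of_nonneg h1qk.le]
      rw [mul_div_assoc', mul_comm, mul_div_assoc]
      have hle : (1 - q) ^ n / (1 - q ^ (k : ℕ)) ^ n ≤ 1 := by
        apply div_le_one_of_le₀
        · exact pow_le_pow_left₀ h1q (by linarith) n
        · positivity
      calc ‖z‖ ^ (k : ℕ) * ((1 - q) ^ n / (1 - q ^ (k : ℕ)) ^ n) ≤ ‖z‖ ^ (k : ℕ) * 1 :=
            mul_le_mul_of_nonneg_left hle (by positivity)
        _ = ‖z‖ ^ (k : ℕ) := mul_one _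
  refine key.congr fun q => ?_
  rw [qLi, ← tsum_mul_left]
end

section
/- For 0 < q < 1, an integer n ≥ 1, and complex x with |x| < 1, the q-dilogarithm satisfies the distribution relation Li_2(x; q^n) = (1/n) Σ_{y : y^n = x} Li_2(y; q), where the sum runs over all n-th roots y of x. -/
/-- The q-deformed dilogarithm `Li_2(z;q) = Σ_{k≥1} z^k/(1-q^k)^2`. -/
noncomputable def qLi2 (z : ℂ) (q : ℝ) : ℂ :=
  ∑' k : ℕ+, z ^ (k : ℕ) / (1 - (q : ℂ) ^ (k : ℕ)) ^ 2

lemma qLi2_summable (z : ℂ) (hz : ‖z‖ < 1) (q : ℝ) (hq0 : 0 < q) (hq1 : q < 1) :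
    Summable (fun k : ℕ+ => z ^ (k : ℕ) / (1 - (q : ℂ) ^ (k : ℕ)) ^ 2) := by
  have hgeom : Summable (fun k : ℕ => ‖z‖ ^ k / (1 - q) ^ 2) :=
    (summable_geometric_of_lt_one (norm_nonneg z) hz).div_const _
  have hsub : Summable (fun k : ℕ+ => ‖z‖ ^ (k : ℕ) / (1 - q) ^ 2) :=
    hgeom.comp_injective (fun a b h => PNat.coe_injective h)
  apply Summable.of_norm
  apply hsub.of_nonneg_of_le (fun k => norm_nonneg _)
  intro k
  have hk : 1 ≤ (k : ℕ) := k.one_le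
  have hqk : q ^ (k : ℕ) ≤ q := by
    calc q ^ (k : ℕ) ≤ q ^ 1 := pow_le_pow_of_le_one hq0.le hq1.le hk
    _ = q := pow_one q
  have hqk0 : 0 < q ^ (k : ℕ) := pow_pos hq0 _
  have h1 : (0:ℝ) < 1 - q := by linarith
  have hnorm : ‖1 - (q:ℂ) ^ (k : ℕ)‖ = 1 - q ^ (k : ℕ) := by
    have : (1 - (q:ℂ) ^ (k : ℕ)) = ((1 - q ^ (k : ℕ) : ℝ) : ℂ) := by push_cast; ring
    rw [this, Complex.norm_real, Real.norm_eq_abs, abs_of_nonneg (by linarith)]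
  rw [norm_div, norm_pow, norm_pow, hnorm]
  gcongr

lemma sum_pow_primroot {n : ℕ} (hn : 0 < n) {ζ : ℂ} (hζ : IsPrimitiveRoot ζ n) (k : ℕ) :
    ∑ j ∈ Finset.range n, (ζ ^ k) ^ j = if n ∣ k then (n : ℂ) else 0 := by
  by_cases h : n ∣ k
  · rw [if_pos h]
    have : ζ ^ k = 1 := (hζ.pow_eq_one_iff_dvd k).mpr h
    simp [this]
  · rw [if_neg h]
    have hne : ζ ^ k ≠ 1 := fun hc => h ((hζ.pow_eq_one_iff_dvd k).mp hc)
    have hpow : (ζ ^ k) ^ n = 1 := by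
      rw [← pow_mul, mul_comm, pow_mul, hζ.pow_eq_one, one_pow]
    rw [geom_sum_eq hne, hpow, sub_self, zero_div]

theorem qLi2_distribution (q : ℝ) (hq0 : 0 < q) (hq1 : q < 1)
    (n : ℕ) (hn : 1 ≤ n) (x : ℂ) (hx0 : x ≠ 0) (hx : ‖x‖ < 1) :
    qLi2 x (q ^ n) = (1 / (n : ℂ)) * ∑' y : {y : ℂ // y ^ n = x}, qLi2 (y : ℂ) q := by
  have hn0 : n ≠ 0 := by omega
  -- the principal n-th root
  set y₀ : ℂ := x ^ ((n : ℂ)⁻¹) with hy₀def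
  have hy₀ : y₀ ^ n = x := Complex.cpow_nat_inv_pow x hn0
  have hy₀0 : y₀ ≠ 0 := fun h => hx0 (by rw [← hy₀, h, zero_pow hn0])
  have hy₀norm : ‖y₀‖ < 1 := by
    by_contra h
    push_neg at h
    have : (1:ℝ) ≤ ‖x‖ := by
      calc (1:ℝ) = 1 ^ n := (one_pow n).symm
      _ ≤ ‖y₀‖ ^ n := pow_le_pow_left₀ zero_le_one h n
      _ = ‖x‖ := by rw [← norm_pow, hy₀]
    linarith
  -- primitive root of unity
  obtain ⟨ζ, hζ⟩ : ∃ ζ : ℂ, IsPrimitiveRoot ζ n := ⟨_, Complex.isPrimitiveRoot_exp n hn0⟩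
  have hζ1 : ∀ j : ℕ, ‖ζ ^ j‖ = 1 := by
    intro j
    have h1 : ‖ζ‖ ^ n = 1 := by rw [← norm_pow, hζ.pow_eq_one, norm_one]
    have : ‖ζ‖ = 1 := by
      have h0 : (0:ℝ) ≤ ‖ζ‖ := norm_nonneg _
      rcases lt_trichotomy ‖ζ‖ 1 with h | h | h
      · exfalso
        have := pow_lt_one₀ h0 h hn0
        linarith
      · exact h
      · exfalso
        have := one_lt_pow₀ h hn0
        linarith
    rw [norm_pow, this, one_pow]
  -- the equivalence Fin n ≃ roots
  have he : ∀ j : Fin n, (ζ ^ (j : ℕ) * y₀) ^ n = x := by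
    intro j
    rw [mul_pow, ← pow_mul, mul_comm (j : ℕ) n, pow_mul, hζ.pow_eq_one, one_pow, one_mul, hy₀]
  let e : Fin n → {y : ℂ // y ^ n = x} := fun j => ⟨ζ ^ (j : ℕ) * y₀, he j⟩
  have hbij : Function.Bijective e := by
    constructor
    · intro a b hab
      have : ζ ^ (a : ℕ) = ζ ^ (b : ℕ) := by
        have := congrArg Subtype.val hab
        simpa [e, hy₀0] using this
      exact Fin.ext (hζ.pow_inj a.isLt b.isLt this)
    · rintro ⟨y, hy⟩
      have hyn : (y / y₀) ^ n = 1 := by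
        rw [div_pow, hy, hy₀, div_self hx0]
      haveI : NeZero n := ⟨hn0⟩
      obtain ⟨i, hi, hiy⟩ := hζ.eq_pow_of_pow_eq_one hyn
      refine ⟨⟨i, hi⟩, ?_⟩
      apply Subtype.ext
      simp only [e]
      rw [hiy, div_mul_cancel₀ y hy₀0]
  let E : Fin n ≃ {y : ℂ // y ^ n = x} := Equiv.ofBijective e hbij
  -- rewrite RHS
  have hRHS : ∑' y : {y : ℂ // y ^ n = x}, qLi2 (y : ℂ) q
      = ∑ j : Fin n, qLi2 (ζ ^ (j : ℕ) * y₀) q := by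
    rw [← E.tsum_eq, tsum_fintype]
    rfl
  have hsumm : ∀ j : Fin n,
      Summable (fun k : ℕ+ => (ζ ^ (j : ℕ) * y₀) ^ (k : ℕ) / (1 - (q:ℂ) ^ (k : ℕ)) ^ 2) := by
    intro j
    apply qLi2_summable _ _ q hq0 hq1
    rw [norm_mul, hζ1, one_mul]
    exact hy₀norm
  -- swap sums
  have hswap : ∑ j : Fin n, qLi2 (ζ ^ (j : ℕ) * y₀) q
      = ∑' k : ℕ+, (if n ∣ (k:ℕ) then (n : ℂ) else 0) * y₀ ^ (k : ℕ) / (1 - (q:ℂ) ^ (k : ℕ)) ^ 2 := by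
    unfold qLi2
    rw [← Summable.tsum_finsetSum (fun j _ => hsumm j)]
    congr 1
    funext k
    have : ∀ j : Fin n, (ζ ^ (j : ℕ) * y₀) ^ (k : ℕ) / (1 - (q:ℂ) ^ (k : ℕ)) ^ 2
        = (ζ ^ (k : ℕ)) ^ (j : ℕ) * (y₀ ^ (k : ℕ) / (1 - (q:ℂ) ^ (k : ℕ)) ^ 2) := by
      intro j
      rw [mul_pow, ← pow_mul, mul_comm (j:ℕ) (k:ℕ), pow_mul]
      ring
    rw [Finset.sum_congr rfl (fun j _ => this j), ← Finset.sum_mul,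
      Fin.sum_univ_eq_sum_range (fun j => (ζ ^ (k : ℕ)) ^ j) n,
      sum_pow_primroot (by omega) hζ, mul_div_assoc]
  -- reindex: support on multiples of n
  set g : ℕ+ → ℂ := fun k =>
    (if n ∣ (k:ℕ) then (n : ℂ) else 0) * y₀ ^ (k : ℕ) / (1 - (q:ℂ) ^ (k : ℕ)) ^ 2 with hg
  have hnpos : 0 < n := hn
  let i : ℕ+ → ℕ+ := fun m => ⟨n, hnpos⟩ * m
  have hi : Function.Injective i := fun a b h => by
    have := congrArg (fun p : ℕ+ => (p : ℕ)) h
    simp only [i, PNat.mul_coe] at this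
    exact PNat.coe_injective (Nat.eq_of_mul_eq_mul_left hnpos this)
  have hsupp : Function.support g ⊆ Set.range i := by
    intro k hk
    simp only [Function.mem_support, hg] at hk
    by_cases hd : n ∣ (k : ℕ)
    · obtain ⟨m, hm⟩ := hd
      have hm0 : 0 < m := by
        rcases Nat.eq_zero_or_pos m with h | h
        · subst h; rw [Nat.mul_zero] at hm; exact absurd hm k.pos.ne'
        · exact h
      exact ⟨⟨m, hm0⟩, PNat.coe_injective (by simp [i, hm]; rfl)⟩
    · exact absurd (by simp [hd]) hk
  have hre : ∑' m : ℕ+, g (i m) = ∑' k : ℕ+, g k := hi.tsum_eq hsupp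
  have hgi : ∀ m : ℕ+, g (i m) = (n : ℂ) * (x ^ (m : ℕ) / (1 - ((q ^ n : ℝ) : ℂ) ^ (m : ℕ)) ^ 2) := by
    intro m
    have hcoe : ((i m : ℕ+) : ℕ) = n * (m : ℕ) := by simp [i]; rfl
    have hdvd : n ∣ ((i m : ℕ+) : ℕ) := ⟨m, hcoe⟩
    simp only [hg, hcoe, if_pos (Nat.dvd_mul_right n (m : ℕ))]
    rw [pow_mul, hy₀]
    have : ((q ^ n : ℝ) : ℂ) ^ (m : ℕ) = (q : ℂ) ^ (n * (m : ℕ)) := by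
      push_cast
      rw [← pow_mul]
    rw [this, pow_mul]
    ring
  rw [hRHS, hswap, ← hre]
  rw [tsum_congr hgi, tsum_mul_left]
  unfold qLi2
  rw [← mul_assoc]
  have hnne : (n : ℂ) ≠ 0 := Nat.cast_ne_zero.mpr hn0
  rw [one_div, inv_mul_cancel₀ hnne, one_mul]
end
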